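/- Let M be a d×n integer matrix of rank r all of whose r×r minors lie in {-1,0,1} (a unimodular matrix). If v is a nonzero vector in the real row space of M whose support is minimal with respect to inclusion among the supports of nonzero vectors of the row space, then the coordinatewise sign vector σ of v (σ_i = 1 if v_i > 0, σ_i = −1 if v_i < 0, σ_i = 0 if v_i = 0) also lies in the row space of M, and v is a positive scalar multiple of σ. -/

import Mathlib

set_option maxHeartbeats 1000000

open Submodule Module Matrix

lemma aux_exists_subfamily {V : Type*} [AddCommGroup V] [Module ℝ V]
    {ι : Type*} [Fintype ι] (u : ι → V) (m : ℕ)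
    (hm : Module.finrank ℝ (Submodule.span ℝ (Set.range u)) = m) :
    ∃ g : Fin m → ι, Function.Injective g ∧ LinearIndependent ℝ (u ∘ g) ∧
      Submodule.span ℝ (Set.range (u ∘ g)) = Submodule.span ℝ (Set.range u) := by
  obtain ⟨s, hsub, hspan, hli⟩ := exists_linearIndependent ℝ (Set.range u)
  have hsf : s.Finite := (Set.finite_range u).subset hsub
  haveI : Fintype s := hsf.fintype
  have hcard : Fintype.card s = m := by
    have := finrank_span_set_eq_card (s := s) hli
    rw [hspan, hm] at this
    rw [this, Set.toFinset_card]
  let e : Fin m ≃ s := (Fintype.equivFinOfCardEq hcard).symm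
  have hchoose : ∀ k : Fin m, ∃ i : ι, u i = (e k : V) := fun k => hsub (e k).2
  choose g hg using hchoose
  have hug : u ∘ g = fun k => ((e k : s) : V) := funext fun k => hg k
  refine ⟨g, ?_, ?_, ?_⟩
  · intro a b hab
    have : (e a : V) = (e b : V) := by rw [← hg a, ← hg b, hab]
    exact e.injective (Subtype.ext this)
  · rw [hug]
    exact hli.comp e e.injective
  · rw [hug]
    have : Set.range (fun k : Fin m => ((e k : s) : V)) = s := by
      have : (fun k : Fin m => ((e k : s) : V)) = Subtype.val ∘ e := rfl
      rw [this, Set.range_comp (Subtype.val) e, Equiv.range_eq_univ, Set.image_univ,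
        Subtype.range_coe]
    rw [this, hspan]

theorem stmt7 (d n r : ℕ) (M : Matrix (Fin d) (Fin n) ℝ)
    (hint : ∀ i j, ∃ z : ℤ, M i j = (z : ℝ))
    (hrank : M.rank = r)
    (huni : ∀ (f : Fin r → Fin d) (g : Fin r → Fin n),
      Function.Injective f → Function.Injective g →
      (M.submatrix f g).det ∈ ({-1, 0, 1} : Set ℝ))
    (W : Submodule ℝ (Fin n → ℝ))
    (hW : W = Submodule.span ℝ (Set.range (fun i => M i)))
    (v : Fin n → ℝ) (hv : v ∈ W) (hv0 : v ≠ 0)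
    (hmin : ∀ w ∈ W, w ≠ 0 → {i | w i ≠ 0} ⊆ {i | v i ≠ 0} → {i | w i ≠ 0} = {i | v i ≠ 0})
    (σ : Fin n → ℝ)
    (hσ : σ = fun i => if 0 < v i then 1 else if v i < 0 then -1 else 0) :
    σ ∈ W ∧ ∃ c : ℝ, 0 < c ∧ v = c • σ := by
  -- dimension of the row space
  have hWr : Module.finrank ℝ W = r := by
    rw [hW]
    exact (Matrix.rank_eq_finrank_span_row M).symm.trans hrank
  -- r ≠ 0
  have hr0 : r ≠ 0 := by
    rintro rfl
    rw [Submodule.finrank_eq_zero] at hWr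
    rw [hWr] at hv
    exact hv0 (by simpa using hv)
  obtain ⟨r', rfl⟩ : ∃ r'', r = r'' + 1 := ⟨r - 1, (Nat.succ_pred_eq_of_pos (Nat.pos_of_ne_zero hr0)).symm⟩
  -- choose r independent rows spanning W
  obtain ⟨f, hfinj, hfli, hfspan⟩ := aux_exists_subfamily (fun i => M i) (r' + 1) (by rw [← hW, hWr])
  set A : Fin (r' + 1) → Fin n → ℝ := fun i => M (f i) with hA
  have hAli : LinearIndependent ℝ A := hfli
  have hAspan : Submodule.span ℝ (Set.range A) = W := hfspan.trans hW.symm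
  have hAW : ∀ i, A i ∈ W := fun i => by
    rw [← hAspan]; exact Submodule.subset_span ⟨i, rfl⟩
  -- coefficients of v
  obtain ⟨y, hy⟩ : ∃ y : Fin (r' + 1) → ℝ, ∑ i, y i • A i = v := by
    rw [← hAspan] at hv
    exact (mem_span_range_iff_exists_fun ℝ).1 hv
  have hyv : ∀ j, ∑ i, y i * A i j = v j := by
    intro j
    have := congrFun hy j
    simpa [Finset.sum_apply] using this
  -- key: any vector of W supported in supp v is a multiple of v
  have key : ∀ w ∈ W, (∀ j, v j = 0 → w j = 0) → ∃ c : ℝ, w = c • v := by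
    intro w hwW hsupp
    by_cases hw0 : w = 0
    · exact ⟨0, by simp [hw0]⟩
    obtain ⟨j0, hj0⟩ : ∃ j0, v j0 ≠ 0 := by
      by_contra h
      push_neg at h
      exact hv0 (funext fun j => h j)
    refine ⟨w j0 / v j0, ?_⟩
    set c := w j0 / v j0 with hc
    by_contra hne
    have hw'W : w - c • v ∈ W := Submodule.sub_mem W hwW (Submodule.smul_mem W c hv)
    have hw'0 : w - c • v ≠ 0 := sub_ne_zero.2 hne
    have hsub : {i | (w - c • v) i ≠ 0} ⊆ {i | v i ≠ 0} := by
      intro i hi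
      simp only [Set.mem_setOf_eq] at hi ⊢
      intro hvi
      apply hi
      simp [hsupp i hvi, hvi]
    have heq := hmin _ hw'W hw'0 hsub
    have hj0' : (w - c • v) j0 ≠ 0 := by
      have : j0 ∈ {i | (w - c • v) i ≠ 0} := by rw [heq]; exact hj0
      exact this
    apply hj0'
    simp [hc, div_mul_cancel₀ _ hj0]
  -- the functional η
  set η : (Fin (r' + 1) → ℝ) →ₗ[ℝ] ℝ := ∑ i, y i • (LinearMap.proj i) with hη
  have hηapp : ∀ x, η x = ∑ i, y i * x i := by
    intro x
    simp [hη, LinearMap.sum_apply, LinearMap.smul_apply, smul_eq_mul]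
  have hη0 : η ≠ 0 := by
    intro h
    apply hv0
    funext j
    rw [← hyv j]
    have : ∀ i, y i = 0 := by
      intro i
      have := congrArg (fun g => g (Pi.single i (1:ℝ))) h
      simp only [LinearMap.zero_apply] at this
      rw [hηapp] at this
      simpa [Pi.single_apply, Finset.sum_ite_eq'] using this
    simp [this]
  -- the column space over the zero set of v
  set ucol : {j : Fin n // v j = 0} → (Fin (r' + 1) → ℝ) := fun j => (fun i => A i j.1) with hucol
  set C : Submodule ℝ (Fin (r' + 1) → ℝ) := Submodule.span ℝ (Set.range ucol) with hC
  have hCle : C ≤ LinearMap.ker η := by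
    rw [hC, Submodule.span_le]
    rintro x ⟨⟨j, hj⟩, rfl⟩
    simp only [SetLike.mem_coe, LinearMap.mem_ker]
    rw [hηapp]
    simpa [hucol, hj] using hyv j
  obtain ⟨x1, hx1⟩ : ∃ x1, η x1 ≠ 0 := by
    by_contra h
    push_neg at h
    exact hη0 (LinearMap.ext fun x => by simp [h x])
  have hrpi : Module.finrank ℝ (Fin (r' + 1) → ℝ) = (r' + 1) := by
    simp [Module.finrank_pi]
  have hkerrank : Module.finrank ℝ (LinearMap.ker η) = r' := by
    have hsurj : LinearMap.range η = ⊤ := by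
      rw [eq_top_iff]
      rintro c -
      refine ⟨(c / η x1) • x1, ?_⟩
      simp only [_root_.map_smul, smul_eq_mul]
      field_simp
    have hh := LinearMap.finrank_range_add_finrank_ker η
    rw [hsurj, finrank_top, hrpi] at hh
    have h1 : Module.finrank ℝ ℝ = 1 := Module.finrank_self ℝ
    omega
  -- finrank of C
  have hCrank : Module.finrank ℝ C = r' := by
    have hle : Module.finrank ℝ C ≤ r' := le_trans (Submodule.finrank_mono hCle) (le_of_eq hkerrank)
    by_contra hne
    have hlt : Module.finrank ℝ C < r' := lt_of_le_of_ne hle hne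
    have hquot := Submodule.finrank_quotient_add_finrank C
    rw [hrpi] at hquot
    have h2 : 2 ≤ Module.finrank ℝ (Submodule.dualAnnihilator C) := by
      rw [← (Subspace.quotEquivAnnihilator C).finrank_eq]
      omega
    have hnotle : ¬ (Submodule.dualAnnihilator C ≤ Submodule.span ℝ {η}) := by
      intro hle'
      have h3 := Submodule.finrank_mono hle'
      rw [finrank_span_singleton hη0] at h3
      omega
    rw [SetLike.not_le_iff_exists] at hnotle
    obtain ⟨φ, hφann, hφnot⟩ := hnotle
    set w' : Fin n → ℝ := fun j => φ (fun i => A i j) with hw'def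
    set y' : Fin (r' + 1) → ℝ := fun i => φ (fun j => if i = j then (1:ℝ) else 0) with hy'def
    have hw'j : ∀ j, w' j = ∑ i, A i j * y' i := by
      intro j
      show φ (fun i => A i j) = _
      conv_lhs => rw [pi_eq_sum_univ (fun i => A i j)]
      rw [map_sum]
      simp [hy'def]
    have hw'W : w' ∈ W := by
      have : w' = ∑ i, y' i • A i := by
        funext j
        rw [Finset.sum_apply, hw'j j]
        simp [mul_comm]
      rw [this]
      exact Submodule.sum_mem W (fun i _ => Submodule.smul_mem W _ (hAW i))
    have hw'supp : ∀ j, v j = 0 → w' j = 0 := by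
      intro j hj
      show φ (fun i => A i j) = 0
      have hmem : (fun i => A i j) ∈ C := Submodule.subset_span ⟨⟨j, hj⟩, rfl⟩
      exact (Submodule.mem_dualAnnihilator φ).1 hφann _ hmem
    obtain ⟨c, hc⟩ := key w' hw'W hw'supp
    have hyy : ∀ i, y' i = c * y i := by
      have hsum : ∑ i, (y' i - c * y i) • A i = 0 := by
        have e1 : ∑ i, (y' i - c * y i) • A i = (∑ i, y' i • A i) - c • ∑ i, y i • A i := by
          rw [Finset.smul_sum, ← Finset.sum_sub_distrib]
          congr 1
          funext i
          rw [sub_smul, smul_smul]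
        rw [e1, hy]
        have e2 : ∑ i, y' i • A i = w' := by
          funext j
          rw [Finset.sum_apply, hw'j j]
          simp [mul_comm]
        rw [e2, hc]
        simp
      intro i
      have := Fintype.linearIndependent_iff.1 hAli _ hsum i
      linarith [this]
    apply hφnot
    rw [Submodule.mem_span_singleton]
    refine ⟨c, ?_⟩
    apply (Pi.basisFun ℝ (Fin (r' + 1))).ext
    intro i
    have hb : (Pi.basisFun ℝ (Fin (r' + 1))) i = fun j => if i = j then (1:ℝ) else 0 := by
      funext j
      simp [Pi.basisFun_apply, Pi.single_apply, eq_comm]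
    rw [hb]
    have hηb : η (fun j => if i = j then (1:ℝ) else 0) = y i := by
      rw [hηapp]
      simp
    simp only [LinearMap.smul_apply, smul_eq_mul, hηb]
    have hyi : φ (fun j => if i = j then (1:ℝ) else 0) = y' i := rfl
    rw [hyi, hyy i]
  -- C is exactly the kernel of η
  have hCeq : C = LinearMap.ker η :=
    Submodule.eq_of_le_of_finrank_eq hCle (by rw [hCrank, hkerrank])
  -- pick r' independent columns over the zero set
  obtain ⟨g0, hg0inj, hg0li, hg0span⟩ := aux_exists_subfamily ucol r' (by rw [← hC, hCrank])
  set u' : Fin r' → (Fin (r' + 1) → ℝ) := ucol ∘ g0 with hu'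
  have hu'span : Submodule.span ℝ (Set.range u') = C := by rw [hu', hg0span, hC]
  -- determinant functional
  set φd : (Fin (r' + 1) → ℝ) →ₗ[ℝ] ℝ :=
    (Matrix.detRowAlternating : AlternatingMap ℝ (Fin (r' + 1) → ℝ) ℝ (Fin (r' + 1))).toMultilinearMap.toLinearMap
      (Fin.snoc u' 0) (Fin.last r') with hφddef
  have hupdate : ∀ x : Fin (r' + 1) → ℝ,
      Function.update (Fin.snoc u' (0 : Fin (r' + 1) → ℝ)) (Fin.last r') x = (Fin.snoc u' x : Fin (r' + 1) → (Fin (r' + 1) → ℝ)) := by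
    intro x
    funext k
    refine Fin.lastCases ?_ ?_ k
    · simp
    · intro k'
      rw [Function.update_of_ne (Fin.castSucc_lt_last k').ne, Fin.snoc_castSucc, Fin.snoc_castSucc]
  have hφdapp : ∀ x, φd x = Matrix.det (Matrix.of (Fin.snoc u' x)) := by
    intro x
    rw [hφddef]
    show Matrix.detRowAlternating (Function.update (Fin.snoc u' 0) (Fin.last r') x) = _
    rw [hupdate]
    rfl
  have hφdC : C ≤ LinearMap.ker φd := by
    rw [← hu'span, Submodule.span_le]
    rintro x ⟨k, rfl⟩
    simp only [SetLike.mem_coe, LinearMap.mem_ker]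
    rw [hφdapp]
    refine Matrix.det_zero_of_row_eq (Fin.castSucc_lt_last k).ne ?_
    show (Fin.snoc u' (u' k) : Fin (r' + 1) → (Fin (r' + 1) → ℝ)) (Fin.castSucc k)
        = (Fin.snoc u' (u' k) : Fin (r' + 1) → (Fin (r' + 1) → ℝ)) (Fin.last r')
    rw [Fin.snoc_castSucc, Fin.snoc_last]
  obtain ⟨x0, hx0⟩ : ∃ x0, x0 ∉ C := by
    by_contra h
    push_neg at h
    have : C = ⊤ := eq_top_iff.2 (fun x _ => h x)
    rw [this, finrank_top, hrpi] at hCrank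
    omega
  have hφd0 : φd x0 ≠ 0 := by
    have hli2 : LinearIndependent ℝ (Fin.snoc u' x0 : Fin (r' + 1) → (Fin (r' + 1) → ℝ)) := by
      rw [linearIndependent_fin_snoc]
      exact ⟨hg0li, by rw [hu'span]; exact hx0⟩
    have hunit : IsUnit (Matrix.of (Fin.snoc u' x0)) :=
      Matrix.linearIndependent_rows_iff_isUnit.mp hli2
    rw [hφdapp]
    exact ((Matrix.isUnit_iff_isUnit_det _).1 hunit).ne_zero
  -- φd is a multiple of η
  obtain ⟨c, hcphi⟩ : ∃ c : ℝ, ∀ z, φd z = c * η z := by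
    refine ⟨φd x1 / η x1, fun z => ?_⟩
    have hz : z - (η z / η x1) • x1 ∈ LinearMap.ker η := by
      simp only [LinearMap.mem_ker, map_sub, _root_.map_smul, smul_eq_mul]
      field_simp
      ring
    rw [← hCeq] at hz
    have hz2 := hφdC hz
    simp only [LinearMap.mem_ker, map_sub, _root_.map_smul, smul_eq_mul, sub_eq_zero] at hz2
    rw [hz2]
    field_simp
  have hcne : c ≠ 0 := by
    intro h
    apply hφd0
    rw [hcphi x0, h, zero_mul]
  -- all nonzero entries of v have absolute value |c|⁻¹
  have hval : ∀ j, v j ≠ 0 → |v j| = |c|⁻¹ := by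
    intro j hj
    set gj : Fin (r' + 1) → Fin n := Fin.snoc (fun k => (g0 k).1) j with hgjdef
    have hgjinj : Function.Injective gj := by
      have hcast : ∀ k : Fin r', gj (Fin.castSucc k) = (g0 k).1 := fun k => Fin.snoc_castSucc _ _ _
      have hlast : gj (Fin.last r') = j := Fin.snoc_last _ _
      intro a b hab
      induction a using Fin.lastCases with
      | last =>
        induction b using Fin.lastCases with
        | last => rfl
        | cast b' =>
          exfalso
          rw [hlast, hcast] at hab
          exact hj (by rw [hab]; exact (g0 b').2)
      | cast a' =>
        induction b using Fin.lastCases with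
        | last =>
          exfalso
          rw [hlast, hcast] at hab
          exact hj (by rw [← hab]; exact (g0 a').2)
        | cast b' =>
          rw [hcast, hcast] at hab
          exact congrArg Fin.castSucc (hg0inj (Subtype.ext hab))
    have hmem := huni f gj hfinj hgjinj
    have hdet : (M.submatrix f gj).det = φd (fun i => A i j) := by
      rw [hφdapp, ← Matrix.det_transpose (M.submatrix f gj)]
      congr 1
      funext k i
      refine Fin.lastCases ?_ (fun k' => ?_) k
      · show (M.submatrix f gj)ᵀ (Fin.last r') i
            = (Fin.snoc u' (fun i => A i j) : Fin (r' + 1) → (Fin (r' + 1) → ℝ)) (Fin.last r') i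
        rw [Fin.snoc_last]
        simp [hgjdef, Matrix.transpose_apply, Matrix.submatrix_apply, hA]
      · show (M.submatrix f gj)ᵀ (Fin.castSucc k') i
            = (Fin.snoc u' (fun i => A i j) : Fin (r' + 1) → (Fin (r' + 1) → ℝ)) (Fin.castSucc k') i
        rw [Fin.snoc_castSucc]
        simp [hgjdef, Matrix.transpose_apply, Matrix.submatrix_apply, hA, hu', hucol]
    have hphival : φd (fun i => A i j) = c * v j := by
      rw [hcphi, hηapp]
      congr 1
      exact hyv j
    have hcv : c * v j ∈ ({-1, 0, 1} : Set ℝ) := by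
      rw [← hphival, ← hdet]
      exact hmem
    have habs : |c| * |v j| = 1 := by
      rw [← abs_mul]
      rcases hcv with h | h | h
      · rw [h]; norm_num
      · exact absurd h (mul_ne_zero hcne hj)
      · rw [h]; norm_num
    have hcabs : |c| ≠ 0 := abs_ne_zero.2 hcne
    field_simp
    linarith [habs]
  -- conclude
  have ha0 : (0:ℝ) < |c|⁻¹ := inv_pos.2 (abs_pos.2 hcne)
  have hveq : v = |c|⁻¹ • σ := by
    funext j
    rw [hσ]
    simp only [Pi.smul_apply, smul_eq_mul]
    rcases lt_trichotomy (v j) 0 with h | h | h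
    · have hv' := hval j h.ne
      rw [abs_of_neg h] at hv'
      rw [if_neg (show ¬ (0:ℝ) < v j from not_lt.mpr h.le), if_pos h]
      linarith
    · simp [h]
    · have hv' := hval j h.ne'
      rw [abs_of_pos h] at hv'
      rw [if_pos h]
      linarith
  have hσW : σ ∈ W := by
    have hσv : σ = (|c|⁻¹)⁻¹ • v := by
      rw [hveq, smul_smul, inv_mul_cancel₀ ha0.ne', one_smul]
    rw [hσv]
    exact Submodule.smul_mem W _ hv
  exact ⟨hσW, |c|⁻¹, ha0, hveq⟩
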